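/- Every complex root of the polynomial X^4 − μ·X^3 − 2μ·X + 4 has absolute value √2; that is, for every z ∈ ℂ with z^4 − μ·z^3 − 2μ·z + 4 = 0 one has |z| = √2. -/

import Mathlib

lemma quad_root_abs (c : ℝ) (hc : c ^ 2 < 8) (z : ℂ)
    (h : z ^ 2 + (c : ℂ) * z + 2 = 0) : ‖z‖ = Real.sqrt 2 := by
  have hconj : (starRingEnd ℂ) z ^ 2 + (c : ℂ) * (starRingEnd ℂ) z + 2 = 0 := by
    have := congrArg (starRingEnd ℂ) h
    simpa [map_ofNat] using this
  have hfac : (z - (starRingEnd ℂ) z) * (z + (starRingEnd ℂ) z + c) = 0 := by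
    linear_combination h - hconj
  rcases mul_eq_zero.1 hfac with h1 | h2
  · -- z is real; contradiction with discriminant
    exfalso
    have hcz : (starRingEnd ℂ) z = z := by
      have := sub_eq_zero.1 h1
      exact this.symm
    have him : z = (z.re : ℂ) := (Complex.conj_eq_iff_re.1 hcz).symm
    rw [him] at h
    have hre : z.re ^ 2 + c * z.re + 2 = 0 := by exact_mod_cast h
    nlinarith [sq_nonneg (z.re + c / 2)]
  · -- z + conj z = -c, so z * conj z = 2
    have hzz : z * (starRingEnd ℂ) z = 2 := by linear_combination z * h2 - h
    have hnormsq : Complex.normSq z = 2 := by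
      have := congrArg Complex.re hzz
      simpa [Complex.mul_conj] using this
    rw [← Complex.sq_norm] at hnormsq
    rw [show Real.sqrt 2 = Real.sqrt (‖z‖ ^ 2) by rw [hnormsq]]
    rw [Real.sqrt_sq (norm_nonneg z)]

/-- Every complex root of `X^4 − μ·X^3 − 2μ·X + 4` (with `μ = ±1`) has absolute
value `√2`. -/
theorem stmt13 (μ : ℤ) (hμ : μ = 1 ∨ μ = -1) (z : ℂ)
    (hz : z ^ 4 - (μ : ℂ) * z ^ 3 - 2 * (μ : ℂ) * z + 4 = 0) :
    ‖z‖ = Real.sqrt 2 := by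
  set s := Real.sqrt 17 with hs
  have hs2 : s ^ 2 = 17 := Real.sq_sqrt (by norm_num)
  have hs0 : 0 ≤ s := Real.sqrt_nonneg 17
  have hs7 : s < 7 := by nlinarith
  set a : ℝ := (-(μ : ℝ) + s) / 2 with ha
  set b : ℝ := (-(μ : ℝ) - s) / 2 with hb
  have hμ2 : (μ : ℝ) ^ 2 = 1 := by rcases hμ with h | h <;> simp [h]
  have hμ1 : |(μ : ℝ)| = 1 := by rcases hμ with h | h <;> simp [h]
  have hmul : a * b = -4 := by rw [ha, hb]; nlinarith
  have hsum : a + b = -(μ : ℝ) := by rw [ha, hb]; ring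
  have hmulC : (a : ℂ) * (b : ℂ) = -4 := by exact_mod_cast congrArg (Complex.ofReal) hmul
  have hsumC : (a : ℂ) + (b : ℂ) = -(μ : ℂ) := by exact_mod_cast congrArg (Complex.ofReal) hsum
  have hfac : (z ^ 2 + (a : ℂ) * z + 2) * (z ^ 2 + (b : ℂ) * z + 2) = 0 := by
    linear_combination hz + z ^ 3 * hsumC + z ^ 2 * hmulC + 2 * z * hsumC
  have hμle : -1 ≤ (μ : ℝ) ∧ (μ : ℝ) ≤ 1 := by
    constructor <;> [exact neg_le_of_abs_le hμ1.le; exact le_of_abs_le hμ1.le]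
  rcases mul_eq_zero.1 hfac with h | h
  · exact quad_root_abs a (by rw [ha]; nlinarith [hμle.1, hμle.2]) z h
  · exact quad_root_abs b (by rw [hb]; nlinarith [hμle.1, hμle.2]) z h
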